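/- arXiv:1006.3891 — 7 statements merged into one kernel-verified Lean document; each statement's English description precedes it below -/
import Mathlib

section
/- Let u : ℝ × ℝ³ → ℝ³ be continuously differentiable, θ : ℝ × ℝ³ → ℝ twice continuously differentiable, ω_rot : ℝ × ℝ³ → ℝ³ continuously differentiable, and a₀ ∈ ℝ. Suppose Dθ/Dt = 0 and the vorticity equation Dω_rot/Dt = (ω_rot·∇)u − a₀ ∇⊥θ holds everywhere, where ∇⊥θ := (∂θ/∂y, −∂θ/∂x, 0). Then the potential vorticity q := ω_rot·∇θ is a material constant: Dq/Dt = 0 everywhere. -/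
open scoped BigOperators

noncomputable section

/-- Points of space-time: `(t, x)` with `x : Fin 3 → ℝ`. -/
abbrev Pt := ℝ × (Fin 3 → ℝ)

/-- Spatial partial derivative in the `j`-th coordinate direction. -/
noncomputable def pd {E : Type*} [NormedAddCommGroup E] [NormedSpace ℝ E]
    (F : Pt → E) (j : Fin 3) (p : Pt) : E :=
  fderiv ℝ F p (0, Pi.single j 1)

/-- Partial time derivative. -/
noncomputable def pt {E : Type*} [NormedAddCommGroup E] [NormedSpace ℝ E]
    (F : Pt → E) (p : Pt) : E :=
  fderiv ℝ F p (1, 0)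

/-- Material derivative `DF/Dt = ∂F/∂t + (u·∇)F`. -/
noncomputable def matD {E : Type*} [NormedAddCommGroup E] [NormedSpace ℝ E]
    (u : Pt → Fin 3 → ℝ) (F : Pt → E) (p : Pt) : E :=
  pt F p + ∑ j, u p j • pd F j p

/-- Spatial gradient of a scalar field. -/
noncomputable def grad (f : Pt → ℝ) (p : Pt) : Fin 3 → ℝ := fun j => pd f j p

/-- `(B·∇)u`, with `i`-th component `∑ j, B j * ∂u_i/∂x_j`. -/
noncomputable def vecAdv (B u : Pt → Fin 3 → ℝ) (p : Pt) : Fin 3 → ℝ :=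
  ∑ j, B p j • pd u j p

/-- Euclidean dot product on `ℝ³`. -/
noncomputable def dot3 (a b : Fin 3 → ℝ) : ℝ := ∑ i, a i * b i

/-- Spatial divergence `div u = ∑ j, ∂u_j/∂x_j`. -/
noncomputable def div3 (u : Pt → Fin 3 → ℝ) (p : Pt) : ℝ := ∑ j, pd u j p j

/-- Spatial curl of a vector field. -/
noncomputable def curl3 (v : Pt → Fin 3 → ℝ) (p : Pt) : Fin 3 → ℝ :=
  ![pd v 1 p 2 - pd v 2 p 1, pd v 2 p 0 - pd v 0 p 2, pd v 0 p 1 - pd v 1 p 0]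

/-- `∇⊥θ := (∂θ/∂y, −∂θ/∂x, 0)`. -/
noncomputable def perpGrad (θ : Pt → ℝ) (p : Pt) : Fin 3 → ℝ :=
  ![pd θ 1 p, -pd θ 0 p, 0]

section Aux

/-- fderiv of a component function. -/
lemma PV.fderiv_comp_apply {F : Pt → Fin 3 → ℝ} {p : Pt} (hF : DifferentiableAt ℝ F p)
    (i : Fin 3) (v : Pt) :
    fderiv ℝ (fun q => F q i) p v = fderiv ℝ F p v i := by
  have h := ((ContinuousLinearMap.proj (R := ℝ) (φ := fun _ : Fin 3 => ℝ) i).hasFDerivAt.comp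
    p hF.hasFDerivAt).fderiv
  have e : (fun q => F q i)
      = (⇑(ContinuousLinearMap.proj (R := ℝ) (φ := fun _ : Fin 3 => ℝ) i) ∘ F) := rfl
  rw [e, h]
  rfl

variable {θ : Pt → ℝ}

lemma PV.contDiff_fderiv (hθ : ContDiff ℝ 2 θ) : ContDiff ℝ 1 (fderiv ℝ θ) := by
  have h2 : ContDiff ℝ ((1 : ℕ) + 1) θ := by norm_num [hθ]
  exact (contDiff_succ_iff_fderiv.mp h2).2.2

lemma PV.diff_dir (hθ : ContDiff ℝ 2 θ) (v : Pt) :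
    Differentiable ℝ (fun q => fderiv ℝ θ q v) :=
  ((PV.contDiff_fderiv hθ).differentiable one_ne_zero).clm_apply (differentiable_const v)

lemma PV.fderiv_dir (hθ : ContDiff ℝ 2 θ) (v p w : Pt) :
    fderiv ℝ (fun q => fderiv ℝ θ q v) p w = fderiv ℝ (fderiv ℝ θ) p w v := by
  rw [fderiv_clm_apply ((PV.contDiff_fderiv hθ).differentiable one_ne_zero p)
    (differentiableAt_const v)]
  simp

lemma PV.swap2 (hθ : ContDiff ℝ 2 θ) (p v w : Pt) :
    fderiv ℝ (fun q => fderiv ℝ θ q v) p w = fderiv ℝ (fun q => fderiv ℝ θ q w) p v := by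
  rw [PV.fderiv_dir hθ v p w, PV.fderiv_dir hθ w p v]
  exact second_derivative_symmetric (f := θ)
    (fun y => ((hθ.differentiable two_ne_zero) y).hasFDerivAt)
    (((PV.contDiff_fderiv hθ).differentiable one_ne_zero p).hasFDerivAt) w v

end Aux

/-- If `Dθ/Dt = 0` and `Dω_rot/Dt = (ω_rot·∇)u − a₀ ∇⊥θ` hold everywhere, then the
potential vorticity `q := ω_rot·∇θ` is a material constant: `Dq/Dt = 0` everywhere. -/
theorem potential_vorticity_material_constant
    (u ωrot : Pt → Fin 3 → ℝ) (θ : Pt → ℝ) (a₀ : ℝ)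
    (hu : ContDiff ℝ 1 u) (hω : ContDiff ℝ 1 ωrot) (hθ : ContDiff ℝ 2 θ)
    (hθeq : ∀ p, matD u θ p = 0)
    (hωeq : ∀ p, matD u ωrot p = vecAdv ωrot u p - a₀ • perpGrad θ p)
    (p : Pt) :
    matD u (fun q => dot3 (ωrot q) (grad θ q)) p = 0 := by
  classical
  have hωd : Differentiable ℝ ωrot := hω.differentiable one_ne_zero
  have hud : Differentiable ℝ u := hu.differentiable one_ne_zero
  have hWd : ∀ i : Fin 3, Differentiable ℝ (fun q => ωrot q i) :=
    fun i => differentiable_pi.mp hωd i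
  have hUd : ∀ j : Fin 3, Differentiable ℝ (fun q => u q j) :=
    fun j => differentiable_pi.mp hud j
  have hGd : ∀ i : Fin 3, Differentiable ℝ (fun q => fderiv ℝ θ q (0, Pi.single i 1)) :=
    fun i => PV.diff_dir hθ _
  -- derivative of the dot product, in any direction v
  have hdot : ∀ v : Pt,
      fderiv ℝ (fun q => dot3 (ωrot q) (grad θ q)) p v
        = ∑ i, (fderiv ℝ (fun q => ωrot q i) p v * fderiv ℝ θ p (0, Pi.single i 1)
            + ωrot p i * fderiv ℝ (fun q => fderiv ℝ θ q (0, Pi.single i 1)) p v) := by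
    intro v
    have hfun : (fun q => dot3 (ωrot q) (grad θ q))
        = fun q => ∑ i, (ωrot q i * fderiv ℝ θ q (0, Pi.single i 1)) := rfl
    rw [hfun, fderiv_fun_sum (fun i _ => ((hWd i p).fun_mul (hGd i p)))]
    rw [ContinuousLinearMap.sum_apply]
    refine Finset.sum_congr rfl fun i _ => ?_
    rw [fderiv_fun_mul (hWd i p) (hGd i p)]
    simp only [ContinuousLinearMap.add_apply, ContinuousLinearMap.coe_smul', Pi.smul_apply,
      smul_eq_mul]
    ring
  -- componentwise vorticity equation
  have hWeq : ∀ i : Fin 3,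
      fderiv ℝ (fun q => ωrot q i) p (1, 0)
        + ∑ j, u p j * fderiv ℝ (fun q => ωrot q i) p (0, Pi.single j 1)
      = (∑ j, ωrot p j * fderiv ℝ (fun q => u q i) p (0, Pi.single j 1))
        - a₀ * perpGrad θ p i := by
    intro i
    have h := congrFun (hωeq p) i
    have h1 : matD u ωrot p i
        = fderiv ℝ (fun q => ωrot q i) p (1, 0)
          + ∑ j, u p j * fderiv ℝ (fun q => ωrot q i) p (0, Pi.single j 1) := by
      simp only [matD, pt, pd, Pi.add_apply, Finset.sum_apply, Pi.smul_apply, smul_eq_mul]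
      rw [PV.fderiv_comp_apply (hωd p) i (1, 0)]
      exact congrArg _ (Finset.sum_congr rfl fun j _ => by
        rw [PV.fderiv_comp_apply (hωd p) i (0, Pi.single j 1)])
    have h2 : vecAdv ωrot u p i
        = ∑ j, ωrot p j * fderiv ℝ (fun q => u q i) p (0, Pi.single j 1) := by
      simp only [vecAdv, Finset.sum_apply, Pi.smul_apply, smul_eq_mul, pd]
      exact Finset.sum_congr rfl fun j _ => by
        rw [PV.fderiv_comp_apply (hud p) i (0, Pi.single j 1)]
    simp only [Pi.sub_apply, Pi.smul_apply, smul_eq_mul] at h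
    rw [h1, h2] at h
    exact h
  -- differentiate the θ equation in direction (0, eᵢ)
  have hGeq : ∀ i : Fin 3,
      fderiv ℝ (fun q => fderiv ℝ θ q (0, Pi.single i 1)) p (1, 0)
        + ∑ j, u p j * fderiv ℝ (fun q => fderiv ℝ θ q (0, Pi.single i 1)) p (0, Pi.single j 1)
      = -∑ j, fderiv ℝ (fun q => u q j) p (0, Pi.single i 1) * fderiv ℝ θ p (0, Pi.single j 1)
      := by
    intro i
    have hΦ : (fun q => fderiv ℝ θ q (1, 0)
        + ∑ j, u q j * fderiv ℝ θ q (0, Pi.single j 1)) = fun _ => (0 : ℝ) := by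
      funext q
      have := hθeq q
      simpa [matD, pt, pd, smul_eq_mul] using this
    have hzero : fderiv ℝ (fun q => fderiv ℝ θ q (1, 0)
        + ∑ j, u q j * fderiv ℝ θ q (0, Pi.single j 1)) p (0, Pi.single i 1) = 0 := by
      rw [hΦ]
      simp
    rw [fderiv_fun_add ((PV.diff_dir hθ (1, 0)) p)
      (DifferentiableAt.fun_sum fun j _ => (hUd j p).fun_mul (hGd j p))] at hzero
    rw [fderiv_fun_sum (fun j _ => (hUd j p).fun_mul (hGd j p))] at hzero
    simp only [ContinuousLinearMap.add_apply, ContinuousLinearMap.sum_apply] at hzero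
    rw [PV.swap2 hθ p (1, 0) (0, Pi.single i 1)] at hzero
    have hB : ∀ j : Fin 3, fderiv ℝ (fun q => u q j * fderiv ℝ θ q (0, Pi.single j 1)) p
          (0, Pi.single i 1)
        = fderiv ℝ (fun q => u q j) p (0, Pi.single i 1) * fderiv ℝ θ p (0, Pi.single j 1)
          + u p j * fderiv ℝ (fun q => fderiv ℝ θ q (0, Pi.single i 1)) p (0, Pi.single j 1) := by
      intro j
      rw [fderiv_fun_mul (hUd j p) (hGd j p)]
      rw [ContinuousLinearMap.add_apply]
      simp only [ContinuousLinearMap.coe_smul', Pi.smul_apply, smul_eq_mul]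
      rw [PV.swap2 hθ p (0, Pi.single j 1) (0, Pi.single i 1)]
      ring
    simp only [hB] at hzero
    rw [Finset.sum_add_distrib] at hzero
    linarith [hzero]
  -- assemble: express matD of q via components
  have key : matD u (fun q => dot3 (ωrot q) (grad θ q)) p
      = ∑ i, ((fderiv ℝ (fun q => ωrot q i) p (1, 0)
            + ∑ j, u p j * fderiv ℝ (fun q => ωrot q i) p (0, Pi.single j 1))
              * fderiv ℝ θ p (0, Pi.single i 1)
          + ωrot p i * (fderiv ℝ (fun q => fderiv ℝ θ q (0, Pi.single i 1)) p (1, 0)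
            + ∑ j, u p j * fderiv ℝ (fun q => fderiv ℝ θ q (0, Pi.single i 1)) p
                (0, Pi.single j 1))) := by
    simp only [matD, pt, pd, smul_eq_mul]
    rw [hdot (1, 0)]
    have hpd : ∀ j : Fin 3, fderiv ℝ (fun q => dot3 (ωrot q) (grad θ q)) p (0, Pi.single j 1)
        = ∑ i, (fderiv ℝ (fun q => ωrot q i) p (0, Pi.single j 1)
              * fderiv ℝ θ p (0, Pi.single i 1)
            + ωrot p i * fderiv ℝ (fun q => fderiv ℝ θ q (0, Pi.single i 1)) p
                (0, Pi.single j 1)) := fun j => hdot (0, Pi.single j 1)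
    simp only [hpd]
    simp only [Finset.mul_sum]
    rw [Finset.sum_comm]
    rw [← Finset.sum_add_distrib]
    refine Finset.sum_congr rfl fun i _ => ?_
    have hsum : ∑ j, (u p j * (fderiv ℝ (fun q => ωrot q i) p (0, Pi.single j 1)
          * fderiv ℝ θ p (0, Pi.single i 1)
        + ωrot p i * fderiv ℝ (fun q => fderiv ℝ θ q (0, Pi.single i 1)) p (0, Pi.single j 1)))
        = (∑ j, u p j * fderiv ℝ (fun q => ωrot q i) p (0, Pi.single j 1))
            * fderiv ℝ θ p (0, Pi.single i 1)
          + ωrot p i * ∑ j, u p j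
            * fderiv ℝ (fun q => fderiv ℝ θ q (0, Pi.single i 1)) p (0, Pi.single j 1) := by
      rw [Finset.sum_mul, Finset.mul_sum, ← Finset.sum_add_distrib]
      exact Finset.sum_congr rfl fun j _ => by ring
    rw [hsum]
    ring
  rw [key]
  simp only [hWeq, hGeq]
  have hperp : ∑ i, perpGrad θ p i * fderiv ℝ θ p (0, Pi.single i 1) = 0 := by
    simp [perpGrad, Fin.sum_univ_three, pd]
    ring
  have hswap : ∑ i, (∑ j, ωrot p j * fderiv ℝ (fun q => u q i) p (0, Pi.single j 1))
        * fderiv ℝ θ p (0, Pi.single i 1)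
      = ∑ i, ωrot p i * ∑ j, fderiv ℝ (fun q => u q j) p (0, Pi.single i 1)
        * fderiv ℝ θ p (0, Pi.single j 1) := by
    simp only [Finset.sum_mul, Finset.mul_sum]
    rw [Finset.sum_comm]
    exact Finset.sum_congr rfl fun i _ => Finset.sum_congr rfl fun j _ => by ring
  have hsplit : ∀ i : Fin 3,
      ((∑ j, ωrot p j * fderiv ℝ (fun q => u q i) p (0, Pi.single j 1))
          - a₀ * perpGrad θ p i) * fderiv ℝ θ p (0, Pi.single i 1)
        + ωrot p i * (-∑ j, fderiv ℝ (fun q => u q j) p (0, Pi.single i 1)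
            * fderiv ℝ θ p (0, Pi.single j 1))
      = ((∑ j, ωrot p j * fderiv ℝ (fun q => u q i) p (0, Pi.single j 1))
            * fderiv ℝ θ p (0, Pi.single i 1)
          - ωrot p i * ∑ j, fderiv ℝ (fun q => u q j) p (0, Pi.single i 1)
            * fderiv ℝ θ p (0, Pi.single j 1))
        - a₀ * (perpGrad θ p i * fderiv ℝ θ p (0, Pi.single i 1)) := fun i => by ring
  simp only [hsplit]
  rw [Finset.sum_sub_distrib, Finset.sum_sub_distrib, hswap, ← Finset.mul_sum, hperp]
  ring
end
end

section
/- Let u : ℝ × ℝ³ → ℝ³ be twice continuously differentiable and B : ℝ × ℝ³ → ℝ³ continuously differentiable, and suppose DB/Dt = (B·∇)u everywhere. Then D((B·∇)u)/Dt = (B·∇)(Du/Dt) everywhere (Ohkitani-type relation: the material derivative commutes with the operator B·∇ applied to u). -/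
open scoped BigOperators

noncomputable section

lemma spatial_vec (v : Fin 3 → ℝ) :
    ((0, v) : Pt) = ∑ k, v k • ((0, Pi.single k (1:ℝ)) : Pt) := by
  refine Prod.ext ?_ ?_
  · rw [Prod.fst_sum]; simp
  · rw [Prod.snd_sum]
    funext i
    simp [Finset.sum_apply, Pi.single_apply]

lemma key_vec (v : Fin 3 → ℝ) :
    ((1, v) : Pt) = ((1, 0) : Pt) + ∑ k, v k • ((0, Pi.single k (1:ℝ)) : Pt) := by
  rw [← spatial_vec]
  ext <;> simp

lemma matD_eq_fderiv {E : Type*} [NormedAddCommGroup E] [NormedSpace ℝ E]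
    (u : Pt → Fin 3 → ℝ) (F : Pt → E) (p : Pt) (_hF : DifferentiableAt ℝ F p) :
    matD u F p = fderiv ℝ F p (1, u p) := by
  rw [matD, pt, key_vec (u p), map_add, map_sum]
  simp only [map_smul, pd]

/-- **Ohkitani-type relation.** If `DB/Dt = (B·∇)u` everywhere, then
`D((B·∇)u)/Dt = (B·∇)(Du/Dt)` everywhere: the material derivative commutes with
the operator `B·∇` applied to `u`. -/
theorem ohkitani_relation
    (u B : Pt → Fin 3 → ℝ)
    (hu : ContDiff ℝ 2 u) (hB : ContDiff ℝ 1 B)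
    (hBeq : ∀ p, matD u B p = vecAdv B u p)
    (p : Pt) :
    matD u (fun q => vecAdv B u q) p = vecAdv B (fun q => matD u u q) p := by
  classical
  have hud : Differentiable ℝ u := hu.differentiable two_ne_zero
  have hu1 : ContDiff ℝ 1 (fderiv ℝ u) := hu.fderiv_right (le_refl 2)
  have hu'd : Differentiable ℝ (fderiv ℝ u) := hu1.differentiable one_ne_zero
  have hBd : Differentiable ℝ B := hB.differentiable one_ne_zero
  set u' : Pt → Pt →L[ℝ] (Fin 3 → ℝ) := fderiv ℝ u with hu'def
  set H := fderiv ℝ u' p with hHdef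
  set B' := fderiv ℝ B p with hB'def
  set e : Fin 3 → Pt := fun j => ((0 : ℝ), Pi.single j (1:ℝ)) with hedef
  set w0 : Pt := (1, u p) with hw0def
  have h1 : HasFDerivAt u' H p := (hu'd p).hasFDerivAt
  have hsymm : ∀ v w, H v w = H w v :=
    second_derivative_symmetric (fun q => (hud q).hasFDerivAt) h1
  have hpdfun : ∀ j, (fun q => pd u j q) = fun q => u' q (e j) := by
    intro j; funext q; simp [pd, hedef, hu'def]
  -- derivative of pd u j
  have hpd : ∀ j, HasFDerivAt (fun q => pd u j q)
      ((u' p).comp (0 : Pt →L[ℝ] Pt) + H.flip (e j)) p := by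
    intro j
    rw [hpdfun j]
    exact h1.clm_apply (hasFDerivAt_const (e j) p)
  -- derivative of each vecAdv summand
  have hBj : ∀ j : Fin 3, HasFDerivAt (fun q => B q j)
      ((ContinuousLinearMap.proj j : (Fin 3 → ℝ) →L[ℝ] ℝ).comp B') p :=
    fun j => (ContinuousLinearMap.proj j : (Fin 3 → ℝ) →L[ℝ] ℝ).hasFDerivAt.comp p
      (hBd p).hasFDerivAt
  have hvecj : ∀ j : Fin 3, HasFDerivAt (fun q => B q j • pd u j q)
      (B p j • ((u' p).comp (0 : Pt →L[ℝ] Pt) + H.flip (e j)) +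
        ((ContinuousLinearMap.proj j : (Fin 3 → ℝ) →L[ℝ] ℝ).comp B').smulRight (pd u j p)) p :=
    fun j => (hBj j).smul (hpd j)
  have hvec : HasFDerivAt (fun q => vecAdv B u q)
      (∑ j, (B p j • ((u' p).comp (0 : Pt →L[ℝ] Pt) + H.flip (e j)) +
        ((ContinuousLinearMap.proj j : (Fin 3 → ℝ) →L[ℝ] ℝ).comp B').smulRight (pd u j p))) p := by
    have := HasFDerivAt.sum (fun j (_ : j ∈ Finset.univ) => hvecj j)
    simpa [vecAdv] using this
  -- B' w0 = vecAdv B u p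
  have hB'w0 : B' w0 = vecAdv B u p := by
    rw [← hBeq p, matD_eq_fderiv u B p (hBd p), hB'def, hw0def]
  -- LHS
  have hLHS : matD u (fun q => vecAdv B u q) p
      = ∑ j, (B p j • H w0 (e j) + B' w0 j • pd u j p) := by
    rw [matD_eq_fderiv u _ p hvec.differentiableAt, hvec.fderiv]
    simp [ContinuousLinearMap.sum_apply, ContinuousLinearMap.smulRight_apply,
      ContinuousLinearMap.flip_apply, ← hw0def]
  -- RHS function rewrite
  have hfun : (fun q => matD u u q) = fun q => u' q (1, u q) := by
    funext q; exact matD_eq_fderiv u u q (hud q)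
  have hw : HasFDerivAt (fun q => ((1 : ℝ), u q)) ((0 : Pt →L[ℝ] ℝ).prod (u' p)) p :=
    HasFDerivAt.prodMk (hasFDerivAt_const (1:ℝ) p) (hud p).hasFDerivAt
  have hG : HasFDerivAt (fun q => u' q (1, u q))
      ((u' p).comp ((0 : Pt →L[ℝ] ℝ).prod (u' p)) + H.flip w0) p :=
    h1.clm_apply hw
  have hRHS : vecAdv B (fun q => matD u u q) p
      = ∑ j, B p j • (H (e j) w0 + u' p (0, pd u j p)) := by
    rw [vecAdv]
    refine Finset.sum_congr rfl fun j _ => ?_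
    congr 1
    rw [pd, hfun, hG.fderiv]
    simp only [ContinuousLinearMap.add_apply, ContinuousLinearMap.flip_apply,
      ContinuousLinearMap.comp_apply, ContinuousLinearMap.prod_apply,
      ContinuousLinearMap.zero_apply, hedef, hu'def, pd]
    abel
  rw [hLHS, hRHS]
  have hexpand : ∀ j, u' p ((0 : ℝ), pd u j p) = ∑ k, pd u j p k • pd u k p := by
    intro j
    rw [spatial_vec (pd u j p), map_sum]
    simp only [map_smul]
    refine Finset.sum_congr rfl fun k _ => ?_
    simp [pd, hu'def, hedef]
  have hB'w0j : ∀ j, B' w0 j = ∑ k, B p k * pd u k p j := by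
    intro j
    rw [hB'w0, vecAdv, Finset.sum_apply]
    simp [Pi.smul_apply, smul_eq_mul]
  have hkey : ∑ j, B' w0 j • pd u j p = ∑ j, B p j • u' p ((0:ℝ), pd u j p) := by
    have hstep : ∀ j, B p j • u' p ((0:ℝ), pd u j p)
        = ∑ k, (B p j * pd u j p k) • pd u k p := by
      intro j; rw [hexpand j, Finset.smul_sum]
      exact Finset.sum_congr rfl fun k _ => by rw [smul_smul]
    rw [Finset.sum_congr rfl fun j _ => hstep j, Finset.sum_comm]
    refine Finset.sum_congr rfl fun j _ => ?_
    rw [hB'w0j j, Finset.sum_smul]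
  simp only [Finset.sum_add_distrib, smul_add]
  rw [hkey, Finset.sum_congr rfl fun j _ =>
    (by rw [hsymm w0 (e j)] : B p j • H w0 (e j) = B p j • H (e j) w0)]
end
end

section
/- Let u : ℝ × ℝ³ → ℝ³ be twice continuously differentiable, θ, q : ℝ × ℝ³ → ℝ twice continuously differentiable, and Q : ℝ → ℝ twice continuously differentiable. Suppose Dθ/Dt = 0 and ∂q/∂t + u·∇q + q div u = 0 everywhere. Then the vector field B := ∇Q(q) × ∇θ satisfies the stretching equation ∂B/∂t − curl(u × B) = −∇(q Q′(q) div u) × ∇θ everywhere. -/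
open scoped BigOperators

noncomputable section

/-- Cross product on `ℝ³`. -/
noncomputable def cross3 (a b : Fin 3 → ℝ) : Fin 3 → ℝ := crossProduct a b

/-! ### Auxiliary machinery -/

def edd (m : Fin 3) : Pt := (0, Pi.single m 1)
def ett : Pt := (1, 0)

section aux
variable {f g : Pt → ℝ} {p v w : Pt}

lemma D_add (hf : DifferentiableAt ℝ f p) (hg : DifferentiableAt ℝ g p) :
    fderiv ℝ (fun q => f q + g q) p v = fderiv ℝ f p v + fderiv ℝ g p v := by
  rw [fderiv_fun_add hf hg]; rfl

lemma D_sub (hf : DifferentiableAt ℝ f p) (hg : DifferentiableAt ℝ g p) :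
    fderiv ℝ (fun q => f q - g q) p v = fderiv ℝ f p v - fderiv ℝ g p v := by
  rw [fderiv_fun_sub hf hg]; rfl

lemma D_neg : fderiv ℝ (fun q => -f q) p v = -fderiv ℝ f p v := by
  rw [fderiv_fun_neg]; rfl

lemma D_mul (hf : DifferentiableAt ℝ f p) (hg : DifferentiableAt ℝ g p) :
    fderiv ℝ (fun q => f q * g q) p v = fderiv ℝ f p v * g p + f p * fderiv ℝ g p v := by
  rw [fderiv_fun_mul hf hg]; simp; ring

lemma D_comp {Q : ℝ → ℝ} (hQ : DifferentiableAt ℝ Q (f p)) (hf : DifferentiableAt ℝ f p) :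
    fderiv ℝ (fun q => Q (f q)) p v = deriv Q (f p) * fderiv ℝ f p v := by
  have h : (fun q => Q (f q)) = Q ∘ f := rfl
  rw [h, fderiv_comp p hQ hf]
  have h1 : fderiv ℝ Q (f p) (fderiv ℝ f p v) = (fderiv ℝ f p v) • (fderiv ℝ Q (f p) 1) := by
    rw [← ContinuousLinearMap.map_smul]; norm_num
  simp only [ContinuousLinearMap.coe_comp', Function.comp_apply, h1, fderiv_apply_one_eq_deriv, smul_eq_mul]
  ring

lemma contDiff_D {E : Type*} [NormedAddCommGroup E] [NormedSpace ℝ E] {f : Pt → E}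
    (hf : ContDiff ℝ 2 f) (v : Pt) : ContDiff ℝ 1 (fun q => fderiv ℝ f q v) :=
  (hf.fderiv_right (by norm_num)).clm_apply contDiff_const

lemma D_apply {F : Pt → Fin 3 → ℝ} (hF : DifferentiableAt ℝ F p) (n : Fin 3) :
    fderiv ℝ F p v n = fderiv ℝ (fun q => F q n) p v := by
  have h : (fun q => F q n)
      = (ContinuousLinearMap.proj (R := ℝ) (φ := fun _ : Fin 3 => ℝ) n) ∘ F := rfl
  rw [h, fderiv_comp p (ContinuousLinearMap.differentiableAt _) hF, ContinuousLinearMap.fderiv]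
  rfl

lemma D_clm_apply_const {c : Pt → Pt →L[ℝ] ℝ} (hc : DifferentiableAt ℝ c p) :
    fderiv ℝ (fun q => c q v) p w = fderiv ℝ c p w v := by
  rw [fderiv_clm_apply hc (differentiableAt_const v)]; simp

lemma D_comm (hf : ContDiff ℝ 2 f) :
    fderiv ℝ (fun q => fderiv ℝ f q v) p w = fderiv ℝ (fun q => fderiv ℝ f q w) p v := by
  have h1 : DifferentiableAt ℝ (fderiv ℝ f) p :=
    ((hf.fderiv_right (m := 1) (by norm_num)).differentiable (by norm_num)).differentiableAt
  rw [D_clm_apply_const h1, D_clm_apply_const h1]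
  exact second_derivative_symmetric
    (fun y => ((hf.differentiable (by norm_num)) y).hasFDerivAt) h1.hasFDerivAt w v

set_option maxHeartbeats 1000000 in
lemma core (u : Pt → Fin 3 → ℝ) (θ qf g : Pt → ℝ) (dQ : ℝ → ℝ)
    (hu : ContDiff ℝ 2 u) (hθ : ContDiff ℝ 2 θ) (hq : ContDiff ℝ 2 qf)
    (hdQ : ContDiff ℝ 1 dQ)
    (i j k : Fin 3)
    (hgd : ∀ (q v : Pt), fderiv ℝ g q v = dQ (qf q) * fderiv ℝ qf q v)
    (hte : ∀ q, fderiv ℝ θ q ett =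
      -(u q i * fderiv ℝ θ q (edd i) + u q j * fderiv ℝ θ q (edd j) + u q k * fderiv ℝ θ q (edd k)))
    (hqe : ∀ q, fderiv ℝ qf q ett =
      -(u q i * fderiv ℝ qf q (edd i) + u q j * fderiv ℝ qf q (edd j) + u q k * fderiv ℝ qf q (edd k))
      - qf q * (fderiv ℝ (fun r => u r i) q (edd i) + fderiv ℝ (fun r => u r j) q (edd j)
                + fderiv ℝ (fun r => u r k) q (edd k)))
    (p : Pt) :
    fderiv ℝ (fun q => fderiv ℝ g q (edd j) * fderiv ℝ θ q (edd k)
                     - fderiv ℝ g q (edd k) * fderiv ℝ θ q (edd j)) p ett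
    - (fderiv ℝ (fun q => u q i * (fderiv ℝ g q (edd k) * fderiv ℝ θ q (edd i)
                                 - fderiv ℝ g q (edd i) * fderiv ℝ θ q (edd k))
                - u q j * (fderiv ℝ g q (edd j) * fderiv ℝ θ q (edd k)
                         - fderiv ℝ g q (edd k) * fderiv ℝ θ q (edd j))) p (edd j)
     - fderiv ℝ (fun q => u q k * (fderiv ℝ g q (edd j) * fderiv ℝ θ q (edd k)
                                 - fderiv ℝ g q (edd k) * fderiv ℝ θ q (edd j))
                - u q i * (fderiv ℝ g q (edd i) * fderiv ℝ θ q (edd j)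
                         - fderiv ℝ g q (edd j) * fderiv ℝ θ q (edd i))) p (edd k))
    = -(fderiv ℝ (fun q => qf q * dQ (qf q) *
          (fderiv ℝ (fun r => u r i) q (edd i) + fderiv ℝ (fun r => u r j) q (edd j)
           + fderiv ℝ (fun r => u r k) q (edd k))) p (edd j) * fderiv ℝ θ p (edd k)
      - fderiv ℝ (fun q => qf q * dQ (qf q) *
          (fderiv ℝ (fun r => u r i) q (edd i) + fderiv ℝ (fun r => u r j) q (edd j)
           + fderiv ℝ (fun r => u r k) q (edd k))) p (edd k) * fderiv ℝ θ p (edd j)) := by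
  have du : Differentiable ℝ u := hu.differentiable (by norm_num)
  have dθ : Differentiable ℝ θ := hθ.differentiable (by norm_num)
  have dq : Differentiable ℝ qf := hq.differentiable (by norm_num)
  have ddQ : Differentiable ℝ dQ := hdQ.differentiable (by norm_num)
  have hU : ∀ m : Fin 3, ContDiff ℝ 2 (fun q => u q m) := fun m =>
    ((ContinuousLinearMap.proj (R := ℝ) (φ := fun _ : Fin 3 => ℝ) m).contDiff).comp hu
  have dU : ∀ m : Fin 3, Differentiable ℝ (fun q => u q m) := fun m =>
    (hU m).differentiable (by norm_num)
  have dT : ∀ v, Differentiable ℝ (fun q => fderiv ℝ θ q v) := fun v =>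
    (contDiff_D hθ v).differentiable (by norm_num)
  have dQf : ∀ v, Differentiable ℝ (fun q => fderiv ℝ qf q v) := fun v =>
    (contDiff_D hq v).differentiable (by norm_num)
  have dA : ∀ (m : Fin 3) (v : Pt), Differentiable ℝ (fun q => fderiv ℝ (fun r => u r m) q v) :=
    fun m v => (contDiff_D (hU m) v).differentiable (by norm_num)
  have hdQq : ∀ (q v : Pt),
      fderiv ℝ (fun r => dQ (qf r)) q v = deriv dQ (qf q) * fderiv ℝ qf q v :=
    fun q v => D_comp (ddQ _) (dq _)
  have ctθ : ∀ m : Fin 3, fderiv ℝ (fun q => fderiv ℝ θ q (edd m)) p ett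
      = fderiv ℝ (fun q => fderiv ℝ θ q ett) p (edd m) := fun m => D_comm hθ
  have ctq : ∀ m : Fin 3, fderiv ℝ (fun q => fderiv ℝ qf q (edd m)) p ett
      = fderiv ℝ (fun q => fderiv ℝ qf q ett) p (edd m) := fun m => D_comm hq
  have csθ : ∀ m n : Fin 3, fderiv ℝ (fun q => fderiv ℝ θ q (edd m)) p (edd n)
      = fderiv ℝ (fun q => fderiv ℝ θ q (edd n)) p (edd m) := fun m n => D_comm hθ
  have csq : ∀ m n : Fin 3, fderiv ℝ (fun q => fderiv ℝ qf q (edd m)) p (edd n)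
      = fderiv ℝ (fun q => fderiv ℝ qf q (edd n)) p (edd m) := fun m n => D_comm hq
  simp only [hgd]
  simp (disch := fun_prop) only [D_sub, D_add, D_mul, D_neg, hdQq]
  simp only [ctθ, ctq]
  simp (disch := fun_prop) only [hte, hqe, D_sub, D_add, D_mul, D_neg, hdQq]
  simp only [csθ j i, csθ k i, csθ k j, csq j i, csq k i, csq k j]
  ring

end aux

set_option maxHeartbeats 2000000 in
/-- **Stretching equation for `B := ∇Q(q) × ∇θ`.** If `Dθ/Dt = 0` and
`∂q/∂t + u·∇q + q div u = 0` everywhere, then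
`∂B/∂t − curl(u × B) = −∇(q Q′(q) div u) × ∇θ` everywhere. -/
theorem B_stretching_equation
    (u : Pt → Fin 3 → ℝ) (θ qf : Pt → ℝ) (Q : ℝ → ℝ)
    (hu : ContDiff ℝ 2 u) (hθ : ContDiff ℝ 2 θ) (hq : ContDiff ℝ 2 qf)
    (hQ : ContDiff ℝ 2 Q)
    (hθeq : ∀ p, matD u θ p = 0)
    (hqeq : ∀ p, pt qf p + dot3 (u p) (grad qf p) + qf p * div3 u p = 0)
    (B : Pt → Fin 3 → ℝ)
    (hBdef : ∀ p, B p = cross3 (grad (fun r => Q (qf r)) p) (grad θ p))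
    (p : Pt) :
    pt B p - curl3 (fun q => cross3 (u q) (B q)) p
      = -cross3 (grad (fun q => qf q * deriv Q (qf q) * div3 u q) p) (grad θ p) := by
  have du : Differentiable ℝ u := hu.differentiable (by norm_num)
  have dθ : Differentiable ℝ θ := hθ.differentiable (by norm_num)
  have dq : Differentiable ℝ qf := hq.differentiable (by norm_num)
  have dQd : Differentiable ℝ Q := hQ.differentiable (by norm_num)
  have hdQ1 : ContDiff ℝ 1 (deriv Q) := by
    have h : deriv Q = fun x => fderiv ℝ Q x 1 := by funext x; rw [fderiv_apply_one_eq_deriv]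
    rw [h]; exact (hQ.fderiv_right (by norm_num)).clm_apply contDiff_const
  have hgC : ContDiff ℝ 2 (fun r => Q (qf r)) := hQ.comp hq
  have dg : Differentiable ℝ (fun r => Q (qf r)) := hgC.differentiable (by norm_num)
  have hgd : ∀ (q v : Pt), fderiv ℝ (fun r => Q (qf r)) q v
      = deriv Q (qf q) * fderiv ℝ qf q v := fun q v => D_comp (dQd _) (dq _)
  have hDa : ∀ (q v : Pt) (n : Fin 3), fderiv ℝ u q v n = fderiv ℝ (fun r => u r n) q v :=
    fun q v n => D_apply (du q) n
  -- θ-equation, three cyclic forms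
  have hte0 : ∀ q, fderiv ℝ θ q ett =
      -(u q 0 * fderiv ℝ θ q (edd 0) + u q 1 * fderiv ℝ θ q (edd 1)
        + u q 2 * fderiv ℝ θ q (edd 2)) := by
    intro q
    have h := hθeq q
    simp only [matD, pt, pd, Fin.sum_univ_three, smul_eq_mul] at h
    simp only [ett, edd]
    linarith
  have hte1 : ∀ q, fderiv ℝ θ q ett =
      -(u q 1 * fderiv ℝ θ q (edd 1) + u q 2 * fderiv ℝ θ q (edd 2)
        + u q 0 * fderiv ℝ θ q (edd 0)) := fun q => by linear_combination hte0 q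
  have hte2 : ∀ q, fderiv ℝ θ q ett =
      -(u q 2 * fderiv ℝ θ q (edd 2) + u q 0 * fderiv ℝ θ q (edd 0)
        + u q 1 * fderiv ℝ θ q (edd 1)) := fun q => by linear_combination hte0 q
  -- q-equation, three cyclic forms
  have hqe0 : ∀ q, fderiv ℝ qf q ett =
      -(u q 0 * fderiv ℝ qf q (edd 0) + u q 1 * fderiv ℝ qf q (edd 1)
        + u q 2 * fderiv ℝ qf q (edd 2))
      - qf q * (fderiv ℝ (fun r => u r 0) q (edd 0) + fderiv ℝ (fun r => u r 1) q (edd 1)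
                + fderiv ℝ (fun r => u r 2) q (edd 2)) := by
    intro q
    have h := hqeq q
    simp only [pt, pd, dot3, grad, div3, Fin.sum_univ_three, hDa] at h
    simp only [ett, edd]
    linarith
  have hqe1 : ∀ q, fderiv ℝ qf q ett =
      -(u q 1 * fderiv ℝ qf q (edd 1) + u q 2 * fderiv ℝ qf q (edd 2)
        + u q 0 * fderiv ℝ qf q (edd 0))
      - qf q * (fderiv ℝ (fun r => u r 1) q (edd 1) + fderiv ℝ (fun r => u r 2) q (edd 2)
                + fderiv ℝ (fun r => u r 0) q (edd 0)) := fun q => by linear_combination hqe0 q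
  have hqe2 : ∀ q, fderiv ℝ qf q ett =
      -(u q 2 * fderiv ℝ qf q (edd 2) + u q 0 * fderiv ℝ qf q (edd 0)
        + u q 1 * fderiv ℝ qf q (edd 1))
      - qf q * (fderiv ℝ (fun r => u r 2) q (edd 2) + fderiv ℝ (fun r => u r 0) q (edd 0)
                + fderiv ℝ (fun r => u r 1) q (edd 1)) := fun q => by linear_combination hqe0 q
  -- replace B
  have hBeq : B = fun q => cross3 (grad (fun r => Q (qf r)) q) (grad θ q) := funext hBdef
  subst hBeq
  -- differentiability of B and u×B
  have hBd : Differentiable ℝ (fun q => cross3 (grad (fun r => Q (qf r)) q) (grad θ q)) := by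
    rw [differentiable_pi]
    intro m
    have dgv : ∀ v, Differentiable ℝ (fun q => fderiv ℝ (fun r => Q (qf r)) q v) := fun v =>
      (contDiff_D hgC v).differentiable (by norm_num)
    have dT : ∀ v, Differentiable ℝ (fun q => fderiv ℝ θ q v) := fun v =>
      (contDiff_D hθ v).differentiable (by norm_num)
    fin_cases m <;> simp [cross3, cross_apply, grad, pd] <;> fun_prop
  have hWd : Differentiable ℝ
      (fun q => cross3 (u q) (cross3 (grad (fun r => Q (qf r)) q) (grad θ q))) := by
    rw [differentiable_pi]
    intro m
    have dgv : ∀ v, Differentiable ℝ (fun q => fderiv ℝ (fun r => Q (qf r)) q v) := fun v =>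
      (contDiff_D hgC v).differentiable (by norm_num)
    have dT : ∀ v, Differentiable ℝ (fun q => fderiv ℝ θ q v) := fun v =>
      (contDiff_D hθ v).differentiable (by norm_num)
    fin_cases m <;> simp [cross3, cross_apply, grad, pd] <;> fun_prop
  funext i
  fin_cases i
  · simp only [Pi.sub_apply, Pi.neg_apply, curl3, Matrix.cons_val_zero, Matrix.cons_val_one,
      Matrix.head_cons, Matrix.cons_val_two, Matrix.tail_cons, Fin.isValue, pt, pd]
    simp only [D_apply (hBd p), D_apply (hWd p)]
    simp only [cross3, cross_apply, grad, pd, div3, Fin.sum_univ_three, hDa,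
      Nat.succ_eq_add_one, Nat.reduceAdd, Fin.mk_one, Fin.reduceFinMk, Fin.isValue,
      Matrix.cons_val_zero, Matrix.cons_val_one, Matrix.head_cons, Matrix.cons_val_two,
      Matrix.tail_cons]
    exact core u θ qf (fun r => Q (qf r)) (deriv Q) hu hθ hq hdQ1 0 1 2 hgd hte0 hqe0 p
  · simp only [Pi.sub_apply, Pi.neg_apply, curl3, Matrix.cons_val_zero, Matrix.cons_val_one,
      Matrix.head_cons, Matrix.cons_val_two, Matrix.tail_cons, Fin.isValue, pt, pd]
    simp only [D_apply (hBd p), D_apply (hWd p)]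
    simp only [cross3, cross_apply, grad, pd, div3, Fin.sum_univ_three, hDa,
      Nat.succ_eq_add_one, Nat.reduceAdd, Fin.mk_one, Fin.reduceFinMk, Fin.isValue,
      Matrix.cons_val_zero, Matrix.cons_val_one, Matrix.head_cons, Matrix.cons_val_two,
      Matrix.tail_cons]
    rw [show (fun q => qf q * deriv Q (qf q) * (fderiv ℝ (fun r => u r 0) q (0, Pi.single 0 1) + fderiv ℝ (fun r => u r 1) q (0, Pi.single 1 1) + fderiv ℝ (fun r => u r 2) q (0, Pi.single 2 1))) = (fun q => qf q * deriv Q (qf q) * (fderiv ℝ (fun r => u r 1) q (0, Pi.single 1 1) + fderiv ℝ (fun r => u r 2) q (0, Pi.single 2 1) + fderiv ℝ (fun r => u r 0) q (0, Pi.single 0 1))) from funext fun q => by ring]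
    exact core u θ qf (fun r => Q (qf r)) (deriv Q) hu hθ hq hdQ1 1 2 0 hgd hte1 hqe1 p
  · simp only [Pi.sub_apply, Pi.neg_apply, curl3, Matrix.cons_val_zero, Matrix.cons_val_one,
      Matrix.head_cons, Matrix.cons_val_two, Matrix.tail_cons, Fin.isValue, pt, pd]
    simp only [D_apply (hBd p), D_apply (hWd p)]
    simp only [cross3, cross_apply, grad, pd, div3, Fin.sum_univ_three, hDa,
      Nat.succ_eq_add_one, Nat.reduceAdd, Fin.mk_one, Fin.reduceFinMk, Fin.isValue,
      Matrix.cons_val_zero, Matrix.cons_val_one, Matrix.head_cons, Matrix.cons_val_two,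
      Matrix.tail_cons]
    rw [show (fun q => qf q * deriv Q (qf q) * (fderiv ℝ (fun r => u r 0) q (0, Pi.single 0 1) + fderiv ℝ (fun r => u r 1) q (0, Pi.single 1 1) + fderiv ℝ (fun r => u r 2) q (0, Pi.single 2 1))) = (fun q => qf q * deriv Q (qf q) * (fderiv ℝ (fun r => u r 2) q (0, Pi.single 2 1) + fderiv ℝ (fun r => u r 0) q (0, Pi.single 0 1) + fderiv ℝ (fun r => u r 1) q (0, Pi.single 1 1))) from funext fun q => by ring]
    exact core u θ qf (fun r => Q (qf r)) (deriv Q) hu hθ hq hdQ1 2 0 1 hgd hte2 hqe2 p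
end
end

section
/- Let u : ℝ × ℝ³ → ℝ³ be continuously differentiable with div u = 0, let θ, q : ℝ × ℝ³ → ℝ be twice continuously differentiable with Dθ/Dt = 0 and Dq/Dt = 0 everywhere, and let Q : ℝ → ℝ be twice continuously differentiable. Then B := ∇Q(q) × ∇θ satisfies DB/Dt = (B·∇)u and div B = 0 everywhere; i.e. B obeys the same stretching equation as the vorticity in the incompressible Euler equations. -/
open scoped BigOperators

noncomputable section

lemma sum_smul_single (v : Fin 3 → ℝ) : ∑ j, v j • (Pi.single j 1 : Fin 3 → ℝ) = v := by
  funext i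
  simp [Finset.sum_apply, Pi.single_apply]

lemma matD_apply {E : Type*} [NormedAddCommGroup E] [NormedSpace ℝ E]
    (u : Pt → Fin 3 → ℝ) (F : Pt → E) (p : Pt) :
    matD u F p = fderiv ℝ F p (1, u p) := by
  have h1 : ((1:ℝ), u p) = ((1:ℝ), (0 : Fin 3 → ℝ)) + ((0:ℝ), u p) := by simp
  have h2 : ∑ j, u p j • fderiv ℝ F p (0, Pi.single j 1)
      = fderiv ℝ F p ((0:ℝ), u p) := by
    have e : ∀ j : Fin 3, u p j • fderiv ℝ F p (0, Pi.single j 1)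
        = fderiv ℝ F p (u p j • (((0:ℝ), Pi.single j 1) : Pt)) :=
      fun j => (map_smul _ _ _).symm
    simp_rw [e]
    rw [← map_sum]
    congr 1
    rw [Prod.ext_iff, Prod.fst_sum, Prod.snd_sum]
    constructor
    · simp
    · simp only [Prod.smul_mk, Prod.snd]
      exact sum_smul_single (u p)
  simp only [matD, pt, pd, h2, h1, map_add]

lemma fderiv_pair (f : Pt → ℝ) (p : Pt) (w : Fin 3 → ℝ) :
    fderiv ℝ f p (((0:ℝ), w) : Pt) = ∑ k, w k * pd f k p := by
  have h : (((0:ℝ), w) : Pt) = ∑ k, w k • (((0:ℝ), Pi.single k 1) : Pt) := by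
    rw [Prod.ext_iff, Prod.fst_sum, Prod.snd_sum]
    constructor
    · simp
    · simp only [Prod.smul_mk, Prod.snd]
      exact (sum_smul_single w).symm
  rw [h, map_sum]
  simp only [map_smul, pd, smul_eq_mul]

lemma diff_pd {f : Pt → ℝ} (hf : ContDiff ℝ 2 f) (j : Fin 3) :
    Differentiable ℝ (fun r => pd f j r) := by
  have hF : ContDiff ℝ 1 (fderiv ℝ f) := hf.fderiv_right (le_refl _)
  have : ContDiff ℝ 1 (fun r => fderiv ℝ f r (((0:ℝ), Pi.single j 1) : Pt)) :=
    hF.clm_apply contDiff_const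
  exact this.differentiable one_ne_zero

lemma fderiv_pd {f : Pt → ℝ} (hf : ContDiff ℝ 2 f) (j : Fin 3) (p : Pt) (w : Pt) :
    fderiv ℝ (fun r => pd f j r) p w
      = fderiv ℝ (fderiv ℝ f) p w (((0:ℝ), Pi.single j 1) : Pt) := by
  have hF : Differentiable ℝ (fderiv ℝ f) :=
    (hf.fderiv_right (m := 1) (le_refl _)).differentiable one_ne_zero
  have h : (fun r => pd f j r)
      = fun r => (fderiv ℝ f r) (((0:ℝ), Pi.single j 1) : Pt) := rfl
  rw [h, fderiv_clm_apply (hF p) (differentiableAt_const _)]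
  simp

lemma snd_symm {f : Pt → ℝ} (hf : ContDiff ℝ 2 f) (p v w : Pt) :
    fderiv ℝ (fderiv ℝ f) p v w = fderiv ℝ (fderiv ℝ f) p w v := by
  have h1 : ∀ y, HasFDerivAt f (fderiv ℝ f y) y :=
    fun y => ((hf.differentiable (by norm_num)) y).hasFDerivAt
  have h2 : HasFDerivAt (fderiv ℝ f) (fderiv ℝ (fderiv ℝ f) p) p :=
    (((hf.fderiv_right (m := 1) (le_refl _)).differentiable one_ne_zero) p).hasFDerivAt
  exact second_derivative_symmetric h1 h2 v w

lemma pd_pd_symm {f : Pt → ℝ} (hf : ContDiff ℝ 2 f) (j k : Fin 3) (p : Pt) :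
    pd (fun r => pd f k r) j p = pd (fun r => pd f j r) k p := by
  have h1 : pd (fun r => pd f k r) j p
      = fderiv ℝ (fun r => pd f k r) p (((0:ℝ), Pi.single j 1) : Pt) := rfl
  have h2 : pd (fun r => pd f j r) k p
      = fderiv ℝ (fun r => pd f j r) p (((0:ℝ), Pi.single k 1) : Pt) := rfl
  rw [h1, h2, fderiv_pd hf, fderiv_pd hf, snd_symm hf]

lemma matD_transport {u : Pt → Fin 3 → ℝ} {f : Pt → ℝ}
    (hu : ContDiff ℝ 1 u) (hf : ContDiff ℝ 2 f) (hfeq : ∀ r, matD u f r = 0)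
    (j : Fin 3) (p : Pt) :
    matD u (fun r => pd f j r) p = - ∑ k, pd u j p k * pd f k p := by
  have hF : Differentiable ℝ (fderiv ℝ f) :=
    (hf.fderiv_right (m := 1) (le_refl _)).differentiable one_ne_zero
  have hud : DifferentiableAt ℝ u p := (hu.differentiable one_ne_zero) p
  have key : (fun r => fderiv ℝ f r (((1:ℝ), u r) : Pt)) = fun _ => (0:ℝ) := by
    funext r
    rw [← matD_apply]
    exact hfeq r
  have h0 : fderiv ℝ (fun r => fderiv ℝ f r (((1:ℝ), u r) : Pt)) p = 0 := by
    rw [key]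
    exact fderiv_const_apply 0
  rw [fderiv_clm_apply (hF p) (DifferentiableAt.prodMk (differentiableAt_const (1:ℝ)) hud)] at h0
  have h0j := DFunLike.congr_fun h0 (((0:ℝ), Pi.single j 1) : Pt)
  have hprod : fderiv ℝ (fun r : Pt => (((1:ℝ), u r) : Pt)) p
      = (fderiv ℝ (fun _ : Pt => (1:ℝ)) p).prod (fderiv ℝ u p) :=
    DifferentiableAt.fderiv_prodMk (differentiableAt_const _) hud
  simp only [ContinuousLinearMap.add_apply, ContinuousLinearMap.coe_comp',
    Function.comp_apply, ContinuousLinearMap.flip_apply, ContinuousLinearMap.zero_apply,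
    hprod, ContinuousLinearMap.prod_apply, fderiv_fun_const, Pi.zero_apply] at h0j
  -- h0j : fderiv f p (0, fderiv u p ej) + fderiv (fderiv f) p ej (1, u p) = 0
  have hpd : fderiv ℝ u p (((0:ℝ), Pi.single j 1) : Pt) = pd u j p := rfl
  rw [hpd, fderiv_pair] at h0j
  have : matD u (fun r => pd f j r) p
      = fderiv ℝ (fderiv ℝ f) p (((0:ℝ), Pi.single j 1) : Pt) (((1:ℝ), u p) : Pt) := by
    rw [matD_apply, fderiv_pd hf, snd_symm hf]
  rw [this]
  have : ∀ k, pd u j p k * pd f k p = (pd u j p) k * pd f k p := fun _ => rfl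
  linarith [h0j]

lemma matD_mul (u : Pt → Fin 3 → ℝ) {f g : Pt → ℝ} {p : Pt}
    (hf : DifferentiableAt ℝ f p) (hg : DifferentiableAt ℝ g p) :
    matD u (fun r => f r * g r) p = matD u f p * g p + f p * matD u g p := by
  rw [matD_apply, matD_apply, matD_apply, fderiv_fun_mul hf hg]
  simp only [ContinuousLinearMap.add_apply, ContinuousLinearMap.smul_apply, smul_eq_mul]
  ring

lemma matD_sub (u : Pt → Fin 3 → ℝ) {f g : Pt → ℝ} {p : Pt}
    (hf : DifferentiableAt ℝ f p) (hg : DifferentiableAt ℝ g p) :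
    matD u (fun r => f r - g r) p = matD u f p - matD u g p := by
  rw [matD_apply, matD_apply, matD_apply, fderiv_fun_sub hf hg]
  simp

lemma pd_mul {f g : Pt → ℝ} {p : Pt} (j : Fin 3)
    (hf : DifferentiableAt ℝ f p) (hg : DifferentiableAt ℝ g p) :
    pd (fun r => f r * g r) j p = pd f j p * g p + f p * pd g j p := by
  simp only [pd, fderiv_fun_mul hf hg]
  simp only [ContinuousLinearMap.add_apply, ContinuousLinearMap.smul_apply, smul_eq_mul]
  ring

lemma pd_sub {f g : Pt → ℝ} {p : Pt} (j : Fin 3)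
    (hf : DifferentiableAt ℝ f p) (hg : DifferentiableAt ℝ g p) :
    pd (fun r => f r - g r) j p = pd f j p - pd g j p := by
  simp only [pd, fderiv_fun_sub hf hg]
  simp

lemma fderiv_eval {B : Pt → Fin 3 → ℝ} {p : Pt} (hB : DifferentiableAt ℝ B p)
    (w : Pt) (i : Fin 3) :
    fderiv ℝ B p w i = fderiv ℝ (fun r => B r i) p w := by
  have h : ∀ i, DifferentiableAt ℝ (fun r => B r i) p := differentiableAt_pi.mp hB
  have hp : fderiv ℝ (fun x i => B x i) p
      = ContinuousLinearMap.pi (fun i => fderiv ℝ (fun r => B r i) p) := fderiv_pi h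
  have hB' : B = fun x i => B x i := rfl
  rw [hB'] at hp ⊢
  rw [hp]
  rfl

lemma matD_eval {u B : Pt → Fin 3 → ℝ} {p : Pt} (hB : DifferentiableAt ℝ B p) (i : Fin 3) :
    matD u B p i = matD u (fun r => B r i) p := by
  rw [matD_apply, matD_apply, fderiv_eval hB]

lemma pd_eval {B : Pt → Fin 3 → ℝ} {p : Pt} (hB : DifferentiableAt ℝ B p)
    (j i : Fin 3) :
    pd B j p i = pd (fun r => B r i) j p := by
  simp only [pd]
  rw [fderiv_eval hB]

lemma matD_comb (u : Pt → Fin 3 → ℝ) {f₁ g₁ f₂ g₂ : Pt → ℝ} {p : Pt}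
    (h1 : DifferentiableAt ℝ f₁ p) (h2 : DifferentiableAt ℝ g₁ p)
    (h3 : DifferentiableAt ℝ f₂ p) (h4 : DifferentiableAt ℝ g₂ p) :
    matD u (fun r => f₁ r * g₁ r - f₂ r * g₂ r) p
      = (matD u f₁ p * g₁ p + f₁ p * matD u g₁ p)
        - (matD u f₂ p * g₂ p + f₂ p * matD u g₂ p) := by
  have H : HasFDerivAt (fun r => f₁ r * g₁ r - f₂ r * g₂ r)
      ((f₁ p • fderiv ℝ g₁ p + g₁ p • fderiv ℝ f₁ p)
        - (f₂ p • fderiv ℝ g₂ p + g₂ p • fderiv ℝ f₂ p)) p :=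
    (h1.hasFDerivAt.mul h2.hasFDerivAt).sub (h3.hasFDerivAt.mul h4.hasFDerivAt)
  rw [matD_apply, H.fderiv]
  simp only [matD_apply, ContinuousLinearMap.sub_apply, ContinuousLinearMap.add_apply,
    ContinuousLinearMap.smul_apply, smul_eq_mul]
  ring

lemma pd_comb {f₁ g₁ f₂ g₂ : Pt → ℝ} {p : Pt} (j : Fin 3)
    (h1 : DifferentiableAt ℝ f₁ p) (h2 : DifferentiableAt ℝ g₁ p)
    (h3 : DifferentiableAt ℝ f₂ p) (h4 : DifferentiableAt ℝ g₂ p) :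
    pd (fun r => f₁ r * g₁ r - f₂ r * g₂ r) j p
      = (pd f₁ j p * g₁ p + f₁ p * pd g₁ j p)
        - (pd f₂ j p * g₂ p + f₂ p * pd g₂ j p) := by
  have H : HasFDerivAt (fun r => f₁ r * g₁ r - f₂ r * g₂ r)
      ((f₁ p • fderiv ℝ g₁ p + g₁ p • fderiv ℝ f₁ p)
        - (f₂ p • fderiv ℝ g₂ p + g₂ p • fderiv ℝ f₂ p)) p :=
    (h1.hasFDerivAt.mul h2.hasFDerivAt).sub (h3.hasFDerivAt.mul h4.hasFDerivAt)
  simp only [pd]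
  rw [H.fderiv]
  simp only [ContinuousLinearMap.sub_apply, ContinuousLinearMap.add_apply,
    ContinuousLinearMap.smul_apply, smul_eq_mul]
  ring

/-- For incompressible flow (`div u = 0`) with `Dθ/Dt = 0` and `Dq/Dt = 0`, the vector
`B := ∇Q(q) × ∇θ` satisfies the vorticity stretching equation `DB/Dt = (B·∇)u`
together with `div B = 0` everywhere. -/
theorem B_stretching_incompressible
    (u : Pt → Fin 3 → ℝ) (θ qf : Pt → ℝ) (Q : ℝ → ℝ)
    (hu : ContDiff ℝ 1 u) (hθ : ContDiff ℝ 2 θ) (hq : ContDiff ℝ 2 qf)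
    (hQ : ContDiff ℝ 2 Q)
    (hdiv : ∀ p, div3 u p = 0)
    (hθeq : ∀ p, matD u θ p = 0)
    (hqeq : ∀ p, matD u qf p = 0)
    (B : Pt → Fin 3 → ℝ)
    (hBdef : ∀ p, B p = cross3 (grad (fun r => Q (qf r)) p) (grad θ p))
    (p : Pt) :
    matD u B p = vecAdv B u p ∧ div3 B p = 0 := by
  set g : Pt → ℝ := fun r => Q (qf r) with hgdef
  have hg : ContDiff ℝ 2 g := hQ.comp hq
  have hgeq : ∀ r, matD u g r = 0 := by
    intro r
    rw [matD_apply]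
    have hc : fderiv ℝ g r = (fderiv ℝ Q (qf r)).comp (fderiv ℝ qf r) :=
      fderiv_comp r ((hQ.differentiable (by norm_num)) (qf r)) ((hq.differentiable (by norm_num)) r)
    rw [hc]
    simp only [ContinuousLinearMap.coe_comp', Function.comp_apply]
    rw [← matD_apply, hqeq r, map_zero]
  have hdg : ∀ j, Differentiable ℝ (fun r => pd g j r) := fun j => diff_pd hg j
  have hdθ : ∀ j, Differentiable ℝ (fun r => pd θ j r) := fun j => diff_pd hθ j
  have hB0 : (fun r => B r 0) = fun r => pd g 1 r * pd θ 2 r - pd g 2 r * pd θ 1 r := by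
    funext r; rw [hBdef]; simp [cross3, cross_apply, grad]
  have hB1 : (fun r => B r 1) = fun r => pd g 2 r * pd θ 0 r - pd g 0 r * pd θ 2 r := by
    funext r; rw [hBdef]; simp [cross3, cross_apply, grad]
  have hB2 : (fun r => B r 2) = fun r => pd g 0 r * pd θ 1 r - pd g 1 r * pd θ 0 r := by
    funext r; rw [hBdef]; simp [cross3, cross_apply, grad]
  have d0 : Differentiable ℝ (fun r => B r 0) := by
    rw [hB0]; exact ((hdg 1).mul (hdθ 2)).sub ((hdg 2).mul (hdθ 1))
  have d1 : Differentiable ℝ (fun r => B r 1) := by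
    rw [hB1]; exact ((hdg 2).mul (hdθ 0)).sub ((hdg 0).mul (hdθ 2))
  have d2 : Differentiable ℝ (fun r => B r 2) := by
    rw [hB2]; exact ((hdg 0).mul (hdθ 1)).sub ((hdg 1).mul (hdθ 0))
  have hBdiff : Differentiable ℝ B := differentiable_pi.mpr (by
    intro i; fin_cases i
    · exact d0
    · exact d1
    · exact d2)
  have hBp0 : B p 0 = pd g 1 p * pd θ 2 p - pd g 2 p * pd θ 1 p := congrFun hB0 p
  have hBp1 : B p 1 = pd g 2 p * pd θ 0 p - pd g 0 p * pd θ 2 p := congrFun hB1 p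
  have hBp2 : B p 2 = pd g 0 p * pd θ 1 p - pd g 1 p * pd θ 0 p := congrFun hB2 p
  have hdivp : pd u 0 p 0 + pd u 1 p 1 + pd u 2 p 2 = 0 := by
    have := hdiv p
    simpa [div3, Fin.sum_univ_three] using this
  have hta : ∀ j, matD u (fun r => pd g j r) p = - ∑ k, pd u j p k * pd g k p :=
    fun j => matD_transport hu hg hgeq j p
  have htb : ∀ j, matD u (fun r => pd θ j r) p = - ∑ k, pd u j p k * pd θ k p :=
    fun j => matD_transport hu hθ hθeq j p
  constructor
  · funext i
    have hvec : ∀ i : Fin 3, vecAdv B u p i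
        = B p 0 * pd u 0 p i + B p 1 * pd u 1 p i + B p 2 * pd u 2 p i := by
      intro i; simp [vecAdv, Fin.sum_univ_three]
    fin_cases i
    · show matD u B p 0 = vecAdv B u p 0
      rw [matD_eval (hBdiff p), hB0, matD_comb u ((hdg 1) p) ((hdθ 2) p) ((hdg 2) p) ((hdθ 1) p),
        hta 1, htb 2, hta 2, htb 1, hvec 0, hBp0, hBp1, hBp2]
      simp only [Fin.sum_univ_three]
      linear_combination (pd g 2 p * pd θ 1 p - pd g 1 p * pd θ 2 p) * hdivp
    · show matD u B p 1 = vecAdv B u p 1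
      rw [matD_eval (hBdiff p), hB1, matD_comb u ((hdg 2) p) ((hdθ 0) p) ((hdg 0) p) ((hdθ 2) p),
        hta 2, htb 0, hta 0, htb 2, hvec 1, hBp0, hBp1, hBp2]
      simp only [Fin.sum_univ_three]
      linear_combination (pd g 0 p * pd θ 2 p - pd g 2 p * pd θ 0 p) * hdivp
    · show matD u B p 2 = vecAdv B u p 2
      rw [matD_eval (hBdiff p), hB2, matD_comb u ((hdg 0) p) ((hdθ 1) p) ((hdg 1) p) ((hdθ 0) p),
        hta 0, htb 1, hta 1, htb 0, hvec 2, hBp0, hBp1, hBp2]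
      simp only [Fin.sum_univ_three]
      linear_combination (pd g 1 p * pd θ 0 p - pd g 0 p * pd θ 1 p) * hdivp
  · have e0 : pd B 0 p 0 = pd (fun r => B r 0) 0 p := pd_eval (hBdiff p) 0 0
    have e1 : pd B 1 p 1 = pd (fun r => B r 1) 1 p := pd_eval (hBdiff p) 1 1
    have e2 : pd B 2 p 2 = pd (fun r => B r 2) 2 p := pd_eval (hBdiff p) 2 2
    rw [div3, Fin.sum_univ_three, e0, e1, e2, hB0, hB1, hB2,
      pd_comb 0 ((hdg 1) p) ((hdθ 2) p) ((hdg 2) p) ((hdθ 1) p),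
      pd_comb 1 ((hdg 2) p) ((hdθ 0) p) ((hdg 0) p) ((hdθ 2) p),
      pd_comb 2 ((hdg 0) p) ((hdθ 1) p) ((hdg 1) p) ((hdθ 0) p),
      pd_pd_symm hg 0 1, pd_pd_symm hg 0 2, pd_pd_symm hg 1 2,
      pd_pd_symm hθ 0 1, pd_pd_symm hθ 0 2, pd_pd_symm hθ 1 2]
    ring
end
end

section
/- Let B : ℝ → ℝ³ be twice differentiable with B(t) ≠ 0 for all t, set a := Ḃ, b := ä = B̈, B̂ := B/|B|, and define α_a := |B|⁻¹(B̂·a), χ_a := |B|⁻¹(B̂ × a), α_b := |B|⁻¹(B̂·b), χ_b := |B|⁻¹(B̂ × b). Then the component Riccati equations hold for all t: α̇_a = |χ_a|² − α_a² + α_b and χ̇_a = −2 α_a χ_a + χ_b. -/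
open scoped BigOperators

noncomputable section

/-- Euclidean norm on `ℝ³`. -/
noncomputable def norm3 (a : Fin 3 → ℝ) : ℝ := Real.sqrt (∑ i, a i ^ 2)

/-- The unit vector `B̂ := B/|B|` along a curve `B : ℝ → ℝ³`. -/
noncomputable def Bhat (B : ℝ → Fin 3 → ℝ) (t : ℝ) : Fin 3 → ℝ :=
  (norm3 (B t))⁻¹ • B t

/-- The growth rate `α_a := |B|⁻¹ (B̂·Ḃ)`. -/
noncomputable def αa (B : ℝ → Fin 3 → ℝ) (t : ℝ) : ℝ :=
  (norm3 (B t))⁻¹ * dot3 (Bhat B t) (deriv B t)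

/-- The swing rate `χ_a := |B|⁻¹ (B̂ × Ḃ)`. -/
noncomputable def χa (B : ℝ → Fin 3 → ℝ) (t : ℝ) : Fin 3 → ℝ :=
  (norm3 (B t))⁻¹ • cross3 (Bhat B t) (deriv B t)

/-- `α_b := |B|⁻¹ (B̂·B̈)`. -/
noncomputable def αb (B : ℝ → Fin 3 → ℝ) (t : ℝ) : ℝ :=
  (norm3 (B t))⁻¹ * dot3 (Bhat B t) (deriv (deriv B) t)

/-- `χ_b := |B|⁻¹ (B̂ × B̈)`. -/
noncomputable def χb (B : ℝ → Fin 3 → ℝ) (t : ℝ) : Fin 3 → ℝ :=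
  (norm3 (B t))⁻¹ • cross3 (Bhat B t) (deriv (deriv B) t)

/-- The unit vector `χ̂_a := χ_a/|χ_a|`. -/
noncomputable def χahat (B : ℝ → Fin 3 → ℝ) (t : ℝ) : Fin 3 → ℝ :=
  (norm3 (χa B t))⁻¹ • χa B t

/-- `c_b := B̂·(χ̂_a × χ_b)`. -/
noncomputable def cb (B : ℝ → Fin 3 → ℝ) (t : ℝ) : ℝ :=
  dot3 (Bhat B t) (cross3 (χahat B t) (χb B t))

/-- The Darboux angular velocity vector `D_a := χ_a + (c_b/|χ_a|) B̂`. -/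
noncomputable def Da (B : ℝ → Fin 3 → ℝ) (t : ℝ) : Fin 3 → ℝ :=
  χa B t + (cb B t * (norm3 (χa B t))⁻¹) • Bhat B t

namespace RicAux

def Q (x : Fin 3 → ℝ) : ℝ := ∑ i, x i ^ 2

lemma Q_pos {x : Fin 3 → ℝ} (hx : x ≠ 0) : 0 < Q x := by
  obtain ⟨i, hi⟩ := Function.ne_iff.mp hx
  have h1 : 0 < x i ^ 2 := lt_of_le_of_ne (sq_nonneg _) (Ne.symm (pow_ne_zero 2 hi))
  calc (0:ℝ) < x i ^ 2 := h1
    _ ≤ Q x := Finset.single_le_sum (f := fun j => x j ^ 2)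
        (fun j _ => sq_nonneg _) (Finset.mem_univ i)

lemma Q_nonneg (x : Fin 3 → ℝ) : 0 ≤ Q x :=
  Finset.sum_nonneg fun _ _ => sq_nonneg _

lemma norm3_sq (x : Fin 3 → ℝ) : norm3 x ^ 2 = Q x :=
  Real.sq_sqrt (Q_nonneg x)

lemma inv_mul_inv_norm3 (x : Fin 3 → ℝ) : (norm3 x)⁻¹ * (norm3 x)⁻¹ = (Q x)⁻¹ := by
  rw [← mul_inv, norm3, show (∑ i, x i ^ 2) = Q x from rfl, Real.mul_self_sqrt (Q_nonneg x)]

lemma dot3_smul (c : ℝ) (u v : Fin 3 → ℝ) : dot3 (c • u) v = c * dot3 u v := by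
  simp [dot3, Finset.mul_sum, mul_assoc]

lemma cross3_smul (c : ℝ) (u v : Fin 3 → ℝ) : cross3 (c • u) v = c • cross3 u v := by
  simp [cross3]

lemma αa_eq (B : ℝ → Fin 3 → ℝ) (s : ℝ) :
    αa B s = (Q (B s))⁻¹ * dot3 (B s) (deriv B s) := by
  rw [αa, Bhat, dot3_smul, ← mul_assoc, inv_mul_inv_norm3]

lemma αb_eq (B : ℝ → Fin 3 → ℝ) (s : ℝ) :
    αb B s = (Q (B s))⁻¹ * dot3 (B s) (deriv (deriv B) s) := by
  rw [αb, Bhat, dot3_smul, ← mul_assoc, inv_mul_inv_norm3]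

lemma χa_eq (B : ℝ → Fin 3 → ℝ) (s : ℝ) :
    χa B s = (Q (B s))⁻¹ • cross3 (B s) (deriv B s) := by
  rw [χa, Bhat, cross3_smul, smul_smul, inv_mul_inv_norm3]

lemma χb_eq (B : ℝ → Fin 3 → ℝ) (s : ℝ) :
    χb B s = (Q (B s))⁻¹ • cross3 (B s) (deriv (deriv B) s) := by
  rw [χb, Bhat, cross3_smul, smul_smul, inv_mul_inv_norm3]

end RicAux

/-- **Component Riccati equations.** For a twice differentiable nonvanishing curve
`B` with `a := Ḃ`, `b := B̈`, the quantities `α_a, χ_a, α_b, χ_b` satisfy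
`α̇_a = |χ_a|² − α_a² + α_b` and `χ̇_a = −2 α_a χ_a + χ_b` for all `t`. -/
theorem riccati_components (B : ℝ → Fin 3 → ℝ)
    (hB : Differentiable ℝ B) (hB' : Differentiable ℝ (deriv B))
    (hne : ∀ t, B t ≠ 0) (t : ℝ) :
    HasDerivAt (fun s => αa B s) (norm3 (χa B t) ^ 2 - αa B t ^ 2 + αb B t) t
      ∧ HasDerivAt (fun s => χa B s) (-(2 * αa B t) • χa B t + χb B t) t := by
  classical
  have hBi : ∀ (i : Fin 3), HasDerivAt (fun u => B u i) (deriv B t i) t :=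
    fun i => hasDerivAt_pi.mp (hB t).hasDerivAt i
  have hAi : ∀ (i : Fin 3), HasDerivAt (fun u => deriv B u i) (deriv (deriv B) t i) t :=
    fun i => hasDerivAt_pi.mp (hB' t).hasDerivAt i
  have hq : (0:ℝ) < RicAux.Q (B t) := RicAux.Q_pos (hne t)
  have hq' : RicAux.Q (B t) ≠ 0 := ne_of_gt hq
  -- derivative of s ↦ Q (B s)
  have hQd : HasDerivAt (fun s => RicAux.Q (B s))
      (∑ i, (deriv B t i * B t i + B t i * deriv B t i)) t := by
    simp only [RicAux.Q, sq]
    exact HasDerivAt.fun_sum fun i _ => (hBi i).mul (hBi i)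
  have hInv := hQd.fun_inv hq'
  -- derivative of s ↦ dot3 (B s) (deriv B s)
  have hDd : HasDerivAt (fun s => dot3 (B s) (deriv B s))
      (∑ i, (deriv B t i * deriv B t i + B t i * deriv (deriv B) t i)) t := by
    simp only [dot3]
    exact HasDerivAt.fun_sum fun i _ => (hBi i).mul (hAi i)
  constructor
  · have h1 := hInv.fun_mul hDd
    have hfun : (fun s => αa B s) = fun s => (RicAux.Q (B s))⁻¹ * dot3 (B s) (deriv B s) :=
      funext fun s => RicAux.αa_eq B s
    rw [hfun]
    refine h1.congr_deriv ?_
    rw [RicAux.norm3_sq, RicAux.χa_eq, RicAux.αa_eq, RicAux.αb_eq]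
    simp only [RicAux.Q, dot3, cross3, cross_apply, Pi.smul_apply, smul_eq_mul,
      Fin.sum_univ_three, Matrix.cons_val_zero, Matrix.cons_val_one, Matrix.head_cons,
      Matrix.cons_val_two, Matrix.tail_cons]
    have hq2 : (B t 0 ^ 2 + B t 1 ^ 2 + B t 2 ^ 2) ≠ 0 := by
      simpa [RicAux.Q, Fin.sum_univ_three] using hq'
    field_simp
    ring
  · rw [hasDerivAt_pi (φ := fun s => χa B s)]
    intro i
    have hfun : ∀ j : Fin 3, (fun s => χa B s j)
        = fun s => (RicAux.Q (B s))⁻¹ * (cross3 (B s) (deriv B s) j) := by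
      intro j; funext s; rw [RicAux.χa_eq]; simp
    have hq2 : (B t 0 ^ 2 + B t 1 ^ 2 + B t 2 ^ 2) ≠ 0 := by
      simpa [RicAux.Q, Fin.sum_univ_three] using hq'
    fin_cases i
    · have hC : HasDerivAt (fun s => cross3 (B s) (deriv B s) 0)
          ((deriv B t 1 * deriv B t 2 + B t 1 * deriv (deriv B) t 2)
            - (deriv B t 2 * deriv B t 1 + B t 2 * deriv (deriv B) t 1)) t := by
        simp only [cross3, cross_apply, Matrix.cons_val_zero]
        exact ((hBi 1).mul (hAi 2)).sub ((hBi 2).mul (hAi 1))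
      have h1 := hInv.fun_mul hC
      show HasDerivAt (fun s => χa B s 0) ((-(2 * αa B t) • χa B t + χb B t) 0) t
      rw [hfun 0]
      refine h1.congr_deriv ?_
      simp only [Pi.add_apply, Pi.smul_apply, RicAux.χa_eq, RicAux.χb_eq, RicAux.αa_eq,
        RicAux.Q, dot3, cross3, cross_apply, smul_eq_mul, Fin.sum_univ_three,
        Matrix.cons_val_zero, Matrix.cons_val_one, Matrix.head_cons,
        Matrix.cons_val_two, Matrix.tail_cons, Pi.neg_apply]
      field_simp
      ring
    · have hC : HasDerivAt (fun s => cross3 (B s) (deriv B s) 1)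
          ((deriv B t 2 * deriv B t 0 + B t 2 * deriv (deriv B) t 0)
            - (deriv B t 0 * deriv B t 2 + B t 0 * deriv (deriv B) t 2)) t := by
        simp only [cross3, cross_apply, Matrix.cons_val_one, Matrix.head_cons]
        exact ((hBi 2).mul (hAi 0)).sub ((hBi 0).mul (hAi 2))
      have h1 := hInv.fun_mul hC
      show HasDerivAt (fun s => χa B s 1) ((-(2 * αa B t) • χa B t + χb B t) 1) t
      rw [hfun 1]
      refine h1.congr_deriv ?_
      simp only [Pi.add_apply, Pi.smul_apply, RicAux.χa_eq, RicAux.χb_eq, RicAux.αa_eq,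
        RicAux.Q, dot3, cross3, cross_apply, smul_eq_mul, Fin.sum_univ_three,
        Matrix.cons_val_zero, Matrix.cons_val_one, Matrix.head_cons,
        Matrix.cons_val_two, Matrix.tail_cons, Pi.neg_apply]
      field_simp
      ring
    · have hC : HasDerivAt (fun s => cross3 (B s) (deriv B s) 2)
          ((deriv B t 0 * deriv B t 1 + B t 0 * deriv (deriv B) t 1)
            - (deriv B t 1 * deriv B t 0 + B t 1 * deriv (deriv B) t 0)) t := by
        simp only [cross3, cross_apply, Matrix.cons_val_two, Matrix.tail_cons, Matrix.head_cons]
        exact ((hBi 0).mul (hAi 1)).sub ((hBi 1).mul (hAi 0))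
      have h1 := hInv.fun_mul hC
      show HasDerivAt (fun s => χa B s 2) ((-(2 * αa B t) • χa B t + χb B t) 2) t
      rw [hfun 2]
      refine h1.congr_deriv ?_
      simp only [Pi.add_apply, Pi.smul_apply, RicAux.χa_eq, RicAux.χb_eq, RicAux.αa_eq,
        RicAux.Q, dot3, cross3, cross_apply, smul_eq_mul, Fin.sum_univ_three,
        Matrix.cons_val_zero, Matrix.cons_val_one, Matrix.head_cons,
        Matrix.cons_val_two, Matrix.tail_cons, Pi.neg_apply]
      field_simp
      ring
end
end

section
/- (Alignment dynamics, first frame equation.) Let B : ℝ → ℝ³ be twice differentiable with B(t) ≠ 0, set a := Ḃ, b := B̈, B̂ := B/|B|, χ_a := |B|⁻¹(B̂ × a), χ_b := |B|⁻¹(B̂ × b), and assume χ_a(t) ≠ 0 for all t. Define χ̂_a := χ_a/|χ_a|, c_b := B̂·(χ̂_a × χ_b), and the Darboux angular velocity vector D_a := χ_a + (c_b/|χ_a|) B̂. Then (d/dt) B̂ = D_a × B̂ for all t. -/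
open scoped BigOperators

noncomputable section

lemma cross3_add_smul_right (u v : Fin 3 → ℝ) (r : ℝ) :
    cross3 (u + r • v) v = cross3 u v := by
  funext j
  fin_cases j <;>
    simp [cross3, cross_apply, Matrix.cons_val_zero, Matrix.cons_val_one, Matrix.head_cons] <;>
    ring

/-- **Alignment dynamics, first frame equation.** For a twice differentiable
nonvanishing curve `B` with nonvanishing swing rate `χ_a`, the unit vector `B̂`
satisfies `(d/dt) B̂ = D_a × B̂`, where `D_a := χ_a + (c_b/|χ_a|) B̂` is the Darboux
angular velocity vector. -/
theorem alignment_dynamics_first (B : ℝ → Fin 3 → ℝ)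
    (hB : Differentiable ℝ B) (hB' : Differentiable ℝ (deriv B))
    (hne : ∀ t, B t ≠ 0) (hχ : ∀ t, χa B t ≠ 0) (t : ℝ) :
    HasDerivAt (fun s => Bhat B s) (cross3 (Da B t) (Bhat B t)) t := by
  set a := deriv B t with ha
  have hq : 0 < ∑ i, B t i ^ 2 := by
    rcases Function.ne_iff.mp (hne t) with ⟨i, hi⟩
    exact Finset.sum_pos' (fun j _ => sq_nonneg _)
      ⟨i, Finset.mem_univ i, lt_of_le_of_ne (sq_nonneg _) (Ne.symm (pow_ne_zero 2 hi))⟩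
  have hn : 0 < norm3 (B t) := Real.sqrt_pos.mpr hq
  set n := norm3 (B t) with hnn
  have hn2 : n ^ 2 = B t 0 ^ 2 + B t 1 ^ 2 + B t 2 ^ 2 := by
    rw [hnn, norm3, Real.sq_sqrt hq.le, Fin.sum_univ_three]
  have hB3 : ∀ i, HasDerivAt (fun s => B s i) (a i) t :=
    fun i => (hasDerivAt_pi.mp (hB t).hasDerivAt) i
  have hqd : HasDerivAt (fun s => ∑ i, B s i ^ 2) (∑ i, 2 * B t i * a i) t := by
    apply HasDerivAt.fun_sum; intro i _
    simpa [mul_comm, mul_assoc] using ((hB3 i).fun_pow 2)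
  have hnd : HasDerivAt (fun s => norm3 (B s)) ((∑ i, 2 * B t i * a i) / (2 * n)) t := by
    simpa [norm3, hnn] using hqd.sqrt hq.ne'
  have hDa : cross3 (Da B t) (Bhat B t) = cross3 (χa B t) (Bhat B t) := by
    rw [Da]; exact cross3_add_smul_right _ _ _
  have hveq : cross3 (χa B t) (Bhat B t) =
      fun i => -((∑ i, 2 * B t i * a i) / (2 * n)) / n ^ 2 * B t i + n⁻¹ * a i := by
    funext j
    fin_cases j <;>
      simp [χa, Bhat, cross3, cross_apply, Fin.sum_univ_three, ← hnn, smul_eq_mul,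
        Matrix.cons_val_zero, Matrix.cons_val_one, Matrix.head_cons] <;>
      field_simp
    · linear_combination (-deriv B t 0) * hn2
    · linear_combination (-deriv B t 1) * hn2
    · linear_combination (-deriv B t 2) * hn2
  rw [hasDerivAt_pi]
  intro i
  have heq : (fun s => Bhat B s i) = fun s => (norm3 (B s))⁻¹ * B s i := by
    funext s; simp [Bhat]
  rw [hDa, hveq, heq]
  exact (hnd.inv hn.ne').mul (hB3 i)
end
end

section
/- (Alignment dynamics, second frame equation.) Let B : ℝ → ℝ³ be twice differentiable with B(t) ≠ 0, set a := Ḃ, b := B̈, B̂ := B/|B|, χ_a := |B|⁻¹(B̂ × a), χ_b := |B|⁻¹(B̂ × b), and assume χ_a(t) ≠ 0 for all t. Define χ̂_a := χ_a/|χ_a|, c_b := B̂·(χ̂_a × χ_b), and the Darboux angular velocity vector D_a := χ_a + (c_b/|χ_a|) B̂. Then (d/dt) χ̂_a = D_a × χ̂_a for all t. -/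
open scoped BigOperators

noncomputable section

lemma norm3_nonneg (a : Fin 3 → ℝ) : 0 ≤ norm3 a := Real.sqrt_nonneg _

lemma sq_norm3 (a : Fin 3 → ℝ) : norm3 a ^ 2 = ∑ i, a i ^ 2 := by
  apply Real.sq_sqrt; positivity

lemma norm3_pos {a : Fin 3 → ℝ} (h : a ≠ 0) : 0 < norm3 a := by
  apply Real.sqrt_pos.2
  rcases Function.ne_iff.1 h with ⟨i, hi⟩
  have : 0 < a i ^ 2 := pow_two_pos_of_ne_zero hi
  exact Finset.sum_pos' (fun j _ => by positivity) ⟨i, Finset.mem_univ i, this⟩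

lemma norm3_smul (r : ℝ) (a : Fin 3 → ℝ) : norm3 (r • a) = |r| * norm3 a := by
  unfold norm3
  rw [← Real.sqrt_sq_eq_abs, ← Real.sqrt_mul (by positivity), Finset.mul_sum]
  congr 1; apply Finset.sum_congr rfl; intro i _
  simp [mul_pow]

lemma cross3_apply' (a b : Fin 3 → ℝ) : cross3 a b =
    ![a 1 * b 2 - a 2 * b 1, a 2 * b 0 - a 0 * b 2, a 0 * b 1 - a 1 * b 0] := rfl

lemma cross3_smul_left (r : ℝ) (a b : Fin 3 → ℝ) : cross3 (r • a) b = r • cross3 a b := by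
  funext i; fin_cases i <;> · simp [cross3_apply']; ring

lemma cross3_smul_right (r : ℝ) (a b : Fin 3 → ℝ) : cross3 a (r • b) = r • cross3 a b := by
  funext i; fin_cases i <;> · simp [cross3_apply']; ring

lemma cross3_add_left (a b c : Fin 3 → ℝ) : cross3 (a + b) c = cross3 a c + cross3 b c := by
  funext i; fin_cases i <;> · simp [cross3_apply']; ring

lemma cross3_self (a : Fin 3 → ℝ) : cross3 a a = 0 := by
  funext i; fin_cases i <;> · simp [cross3_apply']; ring

lemma dot3_smul_left (r : ℝ) (a b : Fin 3 → ℝ) : dot3 (r • a) b = r * dot3 a b := by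
  simp [dot3, Fin.sum_univ_three]; ring

lemma dot3_smul_right (r : ℝ) (a b : Fin 3 → ℝ) : dot3 a (r • b) = r * dot3 a b := by
  simp [dot3, Fin.sum_univ_three]; ring

lemma key_identity (b p q : Fin 3 → ℝ) (i : Fin 3) :
    (∑ j, b j ^ 2) * ((∑ j, (cross3 b p) j ^ 2) * (cross3 b q) i
        - dot3 (cross3 b p) (cross3 b q) * (cross3 b p) i)
    = dot3 b (cross3 (cross3 b p) (cross3 b q)) * (cross3 b (cross3 b p)) i := by
  fin_cases i <;>
  · simp [dot3, cross3_apply', Fin.sum_univ_three]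
    ring

lemma unit_deriv_formula (b p q : Fin 3 → ℝ) (hb : b ≠ 0) (hC : cross3 b p ≠ 0) :
    (norm3 (cross3 b p))⁻¹ • cross3 b q
      - (((norm3 (cross3 b p)) ^ 3)⁻¹ * dot3 (cross3 b p) (cross3 b q)) • cross3 b p
    = (((norm3 b) ^ 2)⁻¹ * ((norm3 (cross3 b p)) ^ 3)⁻¹
        * dot3 b (cross3 (cross3 b p) (cross3 b q))) • cross3 b (cross3 b p) := by
  funext i
  have key := key_identity b p q i
  rw [← sq_norm3 b, ← sq_norm3 (cross3 b p)] at key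
  have hn0 : norm3 b ≠ 0 := ne_of_gt (norm3_pos hb)
  have hm0 : norm3 (cross3 b p) ≠ 0 := ne_of_gt (norm3_pos hC)
  simp only [Pi.smul_apply, Pi.sub_apply, smul_eq_mul]
  field_simp
  linear_combination key

lemma hasDerivAt_unit (f : ℝ → Fin 3 → ℝ) (f' : Fin 3 → ℝ) (t : ℝ)
    (hf : HasDerivAt f f' t) (h0 : f t ≠ 0) :
    HasDerivAt (fun s => (norm3 (f s))⁻¹ • f s)
      ((norm3 (f t))⁻¹ • f' - (((norm3 (f t)) ^ 3)⁻¹ * dot3 (f t) f') • f t) t := by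
  have hm : 0 < norm3 (f t) := norm3_pos h0
  have hcomp : ∀ i, HasDerivAt (fun s => f s i) (f' i) t := fun i => (hasDerivAt_pi.1 hf) i
  have hQ : HasDerivAt (fun s => ∑ j, f s j ^ 2) (∑ j, 2 * f t j * f' j) t := by
    apply HasDerivAt.fun_sum
    intro j _
    have := (hcomp j).fun_pow 2
    simpa [mul_comm, mul_assoc, mul_left_comm] using this
  have hQpos : (0:ℝ) < ∑ j, f t j ^ 2 := by
    have := sq_norm3 (f t); nlinarith
  have hsqrt : HasDerivAt (fun s => norm3 (f s)) (dot3 (f t) f' / norm3 (f t)) t := by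
    have h2 := (Real.hasDerivAt_sqrt (ne_of_gt hQpos)).comp t hQ
    have : (∑ j, 2 * f t j * f' j) / (2 * Real.sqrt (∑ j, f t j ^ 2))
        = dot3 (f t) f' / norm3 (f t) := by
      rw [dot3, norm3, Finset.sum_div, Finset.sum_div]
      congr 1; funext j; ring
    rw [← this]
    simpa [norm3, Function.comp_def, div_eq_inv_mul, one_div] using h2
  have hinv : HasDerivAt (fun s => (norm3 (f s))⁻¹)
      (-(dot3 (f t) f' / norm3 (f t)) / (norm3 (f t)) ^ 2) t := hsqrt.inv (ne_of_gt hm)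
  rw [hasDerivAt_pi]
  intro i
  have h3 := (hinv.fun_mul (hcomp i))
  convert h3 using 1
  · rfl
  · rfl
  simp only [Pi.sub_apply, Pi.smul_apply, smul_eq_mul]
  field_simp
  ring

lemma χa_eq (B : ℝ → Fin 3 → ℝ) (s : ℝ) :
    χa B s = ((norm3 (B s))⁻¹ * (norm3 (B s))⁻¹) • cross3 (B s) (deriv B s) := by
  rw [χa, Bhat, cross3_smul_left, smul_smul]

lemma χb_eq (B : ℝ → Fin 3 → ℝ) (s : ℝ) :
    χb B s = ((norm3 (B s))⁻¹ * (norm3 (B s))⁻¹) • cross3 (B s) (deriv (deriv B) s) := by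
  rw [χb, Bhat, cross3_smul_left, smul_smul]

lemma cross_ne (B : ℝ → Fin 3 → ℝ) (s : ℝ) (hχ : χa B s ≠ 0) :
    cross3 (B s) (deriv B s) ≠ 0 := by
  intro h
  apply hχ
  rw [χa_eq, h, smul_zero]

lemma χahat_eq (B : ℝ → Fin 3 → ℝ) (s : ℝ) (hne : B s ≠ 0)
    (hχ : χa B s ≠ 0) :
    χahat B s = (norm3 (cross3 (B s) (deriv B s)))⁻¹ • cross3 (B s) (deriv B s) := by
  have hn : 0 < norm3 (B s) := norm3_pos hne
  have hm : 0 < norm3 (cross3 (B s) (deriv B s)) := norm3_pos (cross_ne B s hχ)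
  rw [χahat, χa_eq, norm3_smul, smul_smul]
  congr 1
  rw [abs_of_pos (by positivity)]
  field_simp

lemma Da_cross (B : ℝ → Fin 3 → ℝ) (t : ℝ) (hne : B t ≠ 0) (hχ : χa B t ≠ 0) :
    cross3 (Da B t) (χahat B t)
      = (((norm3 (B t)) ^ 2)⁻¹ * ((norm3 (cross3 (B t) (deriv B t))) ^ 3)⁻¹
          * dot3 (B t) (cross3 (cross3 (B t) (deriv B t)) (cross3 (B t) (deriv (deriv B) t))))
        • cross3 (B t) (cross3 (B t) (deriv B t)) := by
  have hnpos : 0 < norm3 (B t) := norm3_pos hne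
  have hmpos : 0 < norm3 (cross3 (B t) (deriv B t)) := norm3_pos (cross_ne B t hχ)
  have hn0 : norm3 (B t) ≠ 0 := ne_of_gt hnpos
  have hm0 : norm3 (cross3 (B t) (deriv B t)) ≠ 0 := ne_of_gt hmpos
  have hnorm_χa : norm3 (χa B t)
      = (norm3 (B t))⁻¹ * (norm3 (B t))⁻¹ * norm3 (cross3 (B t) (deriv B t)) := by
    rw [χa_eq, norm3_smul, abs_of_pos (by positivity)]
  have hcb : cb B t = (norm3 (B t))⁻¹ * ((norm3 (cross3 (B t) (deriv B t)))⁻¹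
      * ((norm3 (B t))⁻¹ * (norm3 (B t))⁻¹))
      * dot3 (B t) (cross3 (cross3 (B t) (deriv B t)) (cross3 (B t) (deriv (deriv B) t))) := by
    rw [cb, Bhat, χahat_eq B t hne hχ, χb_eq, cross3_smul_left, cross3_smul_right,
      dot3_smul_left, dot3_smul_right, dot3_smul_right]
    ring
  rw [Da, χahat_eq B t hne hχ, hcb, hnorm_χa, χa_eq, Bhat, cross3_add_left]
  simp only [cross3_smul_left, cross3_smul_right, cross3_self, smul_zero, smul_smul, zero_add]
  congr 1
  field_simp

/-- **Alignment dynamics, second frame equation.** For a twice differentiable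
nonvanishing curve `B` with nonvanishing swing rate `χ_a`, the unit vector `χ̂_a`
satisfies `(d/dt) χ̂_a = D_a × χ̂_a`, where `D_a := χ_a + (c_b/|χ_a|) B̂` is the
Darboux angular velocity vector. -/
theorem alignment_dynamics_second (B : ℝ → Fin 3 → ℝ)
    (hB : Differentiable ℝ B) (hB' : Differentiable ℝ (deriv B))
    (hne : ∀ t, B t ≠ 0) (hχ : ∀ t, χa B t ≠ 0) (t : ℝ) :
    HasDerivAt (fun s => χahat B s) (cross3 (Da B t) (χahat B t)) t := by
  have hCd : HasDerivAt (fun s => cross3 (B s) (deriv B s))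
      (cross3 (B t) (deriv (deriv B) t)) t := by
    have hBc : ∀ i, HasDerivAt (fun s => B s i) (deriv B t i) t :=
      fun i => (hasDerivAt_pi.1 (hB t).hasDerivAt) i
    have hPc : ∀ i, HasDerivAt (fun s => deriv B s i) (deriv (deriv B) t i) t :=
      fun i => (hasDerivAt_pi.1 (hB' t).hasDerivAt) i
    rw [hasDerivAt_pi]
    intro i
    fin_cases i
    · convert ((hBc 1).mul (hPc 2)).sub ((hBc 2).mul (hPc 1)) using 1
      · rfl
      · simp [cross3_apply', Fin.ext_iff]; ring
    · convert ((hBc 2).mul (hPc 0)).sub ((hBc 0).mul (hPc 2)) using 1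
      · rfl
      · simp [cross3_apply', Fin.ext_iff]; ring
    · convert ((hBc 0).mul (hPc 1)).sub ((hBc 1).mul (hPc 0)) using 1
      · rfl
      · simp [cross3_apply', Fin.ext_iff]; ring
  have hfun : (fun s => χahat B s)
      = fun s => (norm3 (cross3 (B s) (deriv B s)))⁻¹ • cross3 (B s) (deriv B s) := by
    funext s
    exact χahat_eq B s (hne s) (hχ s)
  rw [hfun]
  have hunit := hasDerivAt_unit (fun s => cross3 (B s) (deriv B s))
    (cross3 (B t) (deriv (deriv B) t)) t hCd (cross_ne B t (hχ t))
  convert hunit using 1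
  rw [Da_cross B t (hne t) (hχ t),
    ← unit_deriv_formula (B t) (deriv B t) (deriv (deriv B) t) (hne t) (cross_ne B t (hχ t))]
end
end
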